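/- arXiv:2211.12813 — 2 statements merged into one kernel-verified Lean document; each statement's English description precedes it below -/
import Mathlib

section
/- Let H be a connected k-regular, r-uniform simple hypergraph on n vertices, and let μ1 be the second-largest eigenvalue of its adjacency matrix. Then k - μ1 < 2k(r-1) · λ(H) · √(n / ⌊n/2⌋), where λ(H) is the L(2,1)-chromatic number of H. -/
open scoped Classical

/-- The "colour distance" between two vertices under a colouring `f`. -/
def hDist {V : Type*} (f : V → ℕ) (u v : V) : ℕ := ((f u : ℤ) - (f v : ℤ)).natAbs

/-- An `L(h,k)`-colouring of the hypergraph with edge family `E`. -/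
def IsLColoring {V : Type*} (E : Finset (Finset V)) (h k : ℕ) (f : V → ℕ) : Prop :=
  (∀ u v : V, u ≠ v → (∃ e ∈ E, u ∈ e ∧ v ∈ e) → h ≤ hDist f u v) ∧
  (∀ u v : V, u ≠ v →
    (∃ e₁ ∈ E, ∃ e₂ ∈ E, u ∈ e₁ ∧ v ∈ e₂ ∧ ((e₁ ∩ e₂) \ {u, v}).Nonempty) →
    k ≤ hDist f u v)

/-- The span of a colouring: maximum colour minus minimum colour. -/
noncomputable def hSpan {V : Type*} [Fintype V] (f : V → ℕ) : ℕ :=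
  Finset.univ.sup f - sInf (Set.range f)

/-- The `L(h,k)`-chromatic number of a hypergraph. -/
noncomputable def lamL {V : Type*} [Fintype V] (E : Finset (Finset V)) (h k : ℕ) : ℕ :=
  sInf {s | ∃ f : V → ℕ, IsLColoring E h k f ∧ hSpan f = s}

/-- A simple hypergraph: edges have cardinality at least 2, and no edge contains another. -/
def HSimple {V : Type*} (E : Finset (Finset V)) : Prop :=
  (∀ e ∈ E, 2 ≤ e.card) ∧ ∀ e₁ ∈ E, ∀ e₂ ∈ E, e₁ ⊆ e₂ → e₁ = e₂

/-- Degree of a vertex in a hypergraph. -/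
noncomputable def hDeg {V : Type*} (E : Finset (Finset V)) (v : V) : ℕ :=
  (E.filter (fun e => v ∈ e)).card

/-- The 2-section of a hypergraph. -/
def twoSection {V : Type*} (E : Finset (Finset V)) : SimpleGraph V where
  Adj u v := u ≠ v ∧ ∃ e ∈ E, u ∈ e ∧ v ∈ e
  symm := ⟨by
    rintro u v ⟨huv, e, he, hu, hv⟩
    exact ⟨huv.symm, e, he, hv, hu⟩⟩
  loopless := ⟨by
    rintro u ⟨h, -⟩
    exact h rfl⟩

/-- The adjacency matrix of a hypergraph: `(u,v)` entry is `1` iff `u ≠ v` and some edge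
contains both. -/
noncomputable def hAdjMatrix {V : Type*} [Fintype V] (E : Finset (Finset V)) :
    Matrix V V ℝ :=
  fun u v => if u ≠ v ∧ ∃ e ∈ E, u ∈ e ∧ v ∈ e then 1 else 0


section Aux
variable {V : Type*} [Fintype V]

lemma aux_eigen_lb (E : Finset (Finset V)) (k r : ℕ) (hr : 1 ≤ r)
    (hreg : ∀ v : V, hDeg E v = k) (hunif : ∀ e ∈ E, e.card = r)
    (hA : (hAdjMatrix E).IsHermitian) (j : V) :
    -((k : ℝ) * ((r : ℝ) - 1)) ≤ hA.eigenvalues j := by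
  have hx0 : (⇑(hA.eigenvectorBasis j) : V → ℝ) ≠ 0 := by
    have := hA.eigenvectorBasis.orthonormal.ne_zero j
    intro h
    apply this
    ext i
    exact congrFun h i
  have hev : Module.End.HasEigenvalue (Matrix.toLin' (hAdjMatrix E))
      (hA.eigenvalues j) := by
    refine Module.End.hasEigenvalue_of_hasEigenvector
      (x := (⇑(hA.eigenvectorBasis j) : V → ℝ)) ⟨?_, hx0⟩
    rw [Module.End.mem_eigenspace_iff, Matrix.toLin'_apply]
    exact hA.mulVec_eigenvectorBasis j
  obtain ⟨w, hw⟩ := eigenvalue_mem_ball hev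
  rw [Metric.mem_closedBall, Real.dist_eq] at hw
  have hww : hAdjMatrix E w w = 0 := by
    simp [hAdjMatrix]
  rw [hww, sub_zero] at hw
  have hsum : ∑ j ∈ Finset.univ.erase w, ‖hAdjMatrix E w j‖ ≤ (k : ℝ) * ((r : ℝ) - 1) := by
    have h1 : ∀ j ∈ Finset.univ.erase w, ‖hAdjMatrix E w j‖ =
        if (w ≠ j ∧ ∃ e ∈ E, w ∈ e ∧ j ∈ e) then (1 : ℝ) else 0 := by
      intro j _
      unfold hAdjMatrix
      split_ifs <;> simp
    rw [Finset.sum_congr rfl h1, Finset.sum_boole]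
    have hsub : (Finset.univ.erase w).filter (fun j => w ≠ j ∧ ∃ e ∈ E, w ∈ e ∧ j ∈ e)
        ⊆ (E.filter (fun e => w ∈ e)).biUnion (fun e => e.erase w) := by
      intro j hj
      rw [Finset.mem_filter] at hj
      obtain ⟨-, hne, e, he, hwe, hje⟩ := hj
      exact Finset.mem_biUnion.2 ⟨e, Finset.mem_filter.2 ⟨he, hwe⟩,
        Finset.mem_erase.2 ⟨hne.symm, hje⟩⟩
    have hcard : ((Finset.univ.erase w).filter
        (fun j => w ≠ j ∧ ∃ e ∈ E, w ∈ e ∧ j ∈ e)).card ≤ k * (r - 1) := by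
      refine le_trans (Finset.card_le_card hsub) ?_
      refine le_trans (Finset.card_biUnion_le) ?_
      have : ∀ e ∈ E.filter (fun e => w ∈ e), (e.erase w).card = r - 1 := by
        intro e he
        rw [Finset.mem_filter] at he
        rw [Finset.card_erase_of_mem he.2, hunif e he.1]
      rw [Finset.sum_congr rfl this, Finset.sum_const, smul_eq_mul]
      have := hreg w
      unfold hDeg at this
      rw [this]
    calc (((Finset.univ.erase w).filter
          (fun j => w ≠ j ∧ ∃ e ∈ E, w ∈ e ∧ j ∈ e)).card : ℝ)
        ≤ ((k * (r - 1) : ℕ) : ℝ) := by exact_mod_cast hcard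
      _ = (k : ℝ) * ((r : ℝ) - 1) := by push_cast [hr]; ring
  have := abs_le.1 (le_trans hw hsum)
  linarith [this.1]

end Aux

/-- For a connected `k`-regular `r`-uniform simple hypergraph `H` on `n`
vertices with second-largest adjacency eigenvalue `μ 1`,
`k - μ 1 < 2k(r-1) · λ(H) · √(n / ⌊n/2⌋)`. -/
theorem hyper_spectralGap_lt_lambda {V : Type*} [Fintype V] (E : Finset (Finset V))
    (k r n : ℕ)
    (hn : Fintype.card V = n) (hn2 : 2 ≤ n)
    (hsimple : HSimple E)
    (hconn : (twoSection E).Connected)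
    (hreg : ∀ v : V, hDeg E v = k)
    (hunif : ∀ e ∈ E, e.card = r)
    (hA : (hAdjMatrix E).IsHermitian)
    (μ : Fin n → ℝ)
    (hdec : ∀ i j : Fin n, i ≤ j → μ j ≤ μ i)
    (hperm : ∃ σ : Fin n ≃ V, ∀ i : Fin n, μ i = hA.eigenvalues (σ i)) :
    (k : ℝ) - μ ⟨1, by omega⟩ <
      2 * (k : ℝ) * ((r : ℝ) - 1) * (lamL E 2 1 : ℝ) *
        Real.sqrt ((n : ℝ) / ((n / 2 : ℕ) : ℝ)) := by
  classical
  -- get an adjacent pair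
  obtain ⟨u, v, huv⟩ := Fintype.exists_pair_of_one_lt_card (by omega : 1 < Fintype.card V)
  obtain ⟨p⟩ := hconn.preconnected u v
  obtain ⟨b, hadj, -⟩ : ∃ b, (twoSection E).Adj u b ∧ True := by
    cases p with
    | nil => exact absurd rfl huv
    | cons h q => exact ⟨_, h, trivial⟩
  obtain ⟨hub, e, he, hue, hbe⟩ := hadj
  have hr2 : 2 ≤ r := by
    have := hsimple.1 e he
    rwa [hunif e he] at this
  have hk1 : 1 ≤ k := by
    rw [← hreg u]
    have : e ∈ E.filter (fun e => u ∈ e) := Finset.mem_filter.2 ⟨he, hue⟩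
    exact Finset.card_pos.2 ⟨e, this⟩
  -- lamL ≥ 2
  have hS_ne : {s | ∃ f : V → ℕ, IsLColoring E 2 1 f ∧ hSpan f = s}.Nonempty := by
    refine ⟨_, fun w => 2 * ((Fintype.equivFin V) w : ℕ), ⟨?_, ?_⟩, rfl⟩
    · intro x y hxy _
      have hne : ((Fintype.equivFin V) x : ℕ) ≠ ((Fintype.equivFin V) y : ℕ) := by
        intro h
        exact hxy ((Fintype.equivFin V).injective (Fin.ext h))
      unfold hDist
      push_cast
      omega
    · intro x y hxy _
      have hne : ((Fintype.equivFin V) x : ℕ) ≠ ((Fintype.equivFin V) y : ℕ) := by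
        intro h
        exact hxy ((Fintype.equivFin V).injective (Fin.ext h))
      unfold hDist
      push_cast
      omega
  have hlam : 2 ≤ lamL E 2 1 := by
    obtain ⟨f, hf, hspan⟩ := Nat.sInf_mem hS_ne
    have h2 : 2 ≤ hDist f u b := hf.1 u b hub ⟨e, he, hue, hbe⟩
    rw [show lamL E 2 1 = sInf {s | ∃ f : V → ℕ, IsLColoring E 2 1 f ∧ hSpan f = s} from rfl,
      ← hspan]
    have hsu : f u ≤ Finset.univ.sup f := Finset.le_sup (Finset.mem_univ u)
    have hsb : f b ≤ Finset.univ.sup f := Finset.le_sup (Finset.mem_univ b)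
    have hiu : sInf (Set.range f) ≤ f u := Nat.sInf_le ⟨u, rfl⟩
    have hib : sInf (Set.range f) ≤ f b := Nat.sInf_le ⟨b, rfl⟩
    unfold hDist at h2
    unfold hSpan
    omega
  -- eigenvalue lower bound
  obtain ⟨σ, hσ⟩ := hperm
  have hμ1 : -((k : ℝ) * ((r : ℝ) - 1)) ≤ μ ⟨1, by omega⟩ := by
    rw [hσ ⟨1, by omega⟩]
    exact aux_eigen_lb E k r (by omega) hreg hunif hA _
  -- sqrt term ≥ 1
  have hsq : 1 ≤ Real.sqrt ((n : ℝ) / ((n / 2 : ℕ) : ℝ)) := by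
    rw [Real.one_le_sqrt]
    rw [le_div_iff₀ (by exact_mod_cast Nat.div_pos hn2 two_pos : (0 : ℝ) < ((n / 2 : ℕ) : ℝ))]
    · rw [one_mul]
      exact_mod_cast Nat.div_le_self n 2
  -- final arithmetic
  have hkR : (1 : ℝ) ≤ (k : ℝ) := by exact_mod_cast hk1
  have hrR : (2 : ℝ) ≤ (r : ℝ) := by exact_mod_cast hr2
  have hlR : (2 : ℝ) ≤ (lamL E 2 1 : ℝ) := by exact_mod_cast hlam
  have hnn : (0 : ℝ) ≤ 2 * (k : ℝ) * ((r : ℝ) - 1) := by nlinarith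
  have hls : (2 : ℝ) ≤ (lamL E 2 1 : ℝ) * Real.sqrt ((n : ℝ) / ((n / 2 : ℕ) : ℝ)) := by
    nlinarith
  have hrhs : 2 * (k : ℝ) * ((r : ℝ) - 1) * 2 ≤
      2 * (k : ℝ) * ((r : ℝ) - 1) * ((lamL E 2 1 : ℝ) *
        Real.sqrt ((n : ℝ) / ((n / 2 : ℕ) : ℝ))) :=
    mul_le_mul_of_nonneg_left hls hnn
  nlinarith
end

section
/- Let K^r_{c,m} be an r-uniform star-hypergraph with centre of size c and m ≥ 2 edges (so 1 ≤ c < r). Then λ(K^r_{c,m}) = m(r - c) + 2c - 1, where λ denotes the L(2,1)-chromatic number. -/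
open scoped Classical

/-- `IsStarHypergraph E r c m C` : `E` is the edge family of an `r`-uniform star-hypergraph
`K^r_{c,m}` on the whole vertex type, with centre `C` of size `c` and `m` edges, any two
distinct edges intersecting exactly in the centre. -/
def IsStarHypergraph {V : Type*} (E : Finset (Finset V)) (r c m : ℕ) (C : Finset V) : Prop :=
  E.card = m ∧ (∀ e ∈ E, e.card = r) ∧ C.card = c ∧
    (∀ e₁ ∈ E, ∀ e₂ ∈ E, e₁ ≠ e₂ → e₁ ∩ e₂ = C) ∧
    (∀ v : V, ∃ e ∈ E, v ∈ e)

lemma sepQ : ∀ (n : ℕ) (S D : Finset ℤ), S.card ≤ n → D ⊆ S →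
    (∀ x ∈ D, ∀ y ∈ S, y ≠ x → 2 ≤ (y - x).natAbs) → ∀ (hS : S.Nonempty),
    (S.card : ℤ) - 1 + D.card - (if S.max' hS ∈ D then 1 else 0) ≤ S.max' hS - S.min' hS := by
  intro n
  induction n with
  | zero =>
    intro S D hcard _ _ hS
    exact absurd (Finset.card_pos.mpr hS) (by omega)
  | succ n ih =>
    intro S D hcard hDS hsep hS
    set M := S.max' hS with hM
    by_cases hS' : (S.erase M).Nonempty
    · set S' := S.erase M with hSdef
      set D' := D.erase M with hDdef
      have hMmem : M ∈ S := S.max'_mem hS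
      have hcardS' : S'.card = S.card - 1 := Finset.card_erase_of_mem hMmem
      have hDS' : D' ⊆ S' := fun x hx => Finset.mem_erase.mpr
        ⟨(Finset.mem_erase.mp hx).1, hDS (Finset.mem_erase.mp hx).2⟩
      have hsep' : ∀ x ∈ D', ∀ y ∈ S', y ≠ x → 2 ≤ (y - x).natAbs := fun x hx y hy hne =>
        hsep x (Finset.mem_erase.mp hx).2 y (Finset.mem_erase.mp hy).2 hne
      have key := ih S' D' (by omega) hDS' hsep' hS'
      set M' := S'.max' hS' with hM'
      have hM'S : M' ∈ S' := S'.max'_mem hS'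
      have hM'ne : M' ≠ M := (Finset.mem_erase.mp hM'S).1
      have hM'mem : M' ∈ S := (Finset.mem_erase.mp hM'S).2
      have hM'lt : M' < M := lt_of_le_of_ne (S.le_max' _ hM'mem) hM'ne
      -- min' S' = min' S
      have hminmemS' : S.min' hS ∈ S' := by
        refine Finset.mem_erase.mpr ⟨?_, S.min'_mem hS⟩
        intro h
        have : M' < S.min' hS := h ▸ hM'lt
        exact absurd (S.min'_le M' hM'mem) (by omega)
      have hmin : S'.min' hS' = S.min' hS := by
        apply le_antisymm (S'.min'_le _ hminmemS')
        exact S.min'_le _ (Finset.mem_erase.mp (S'.min'_mem hS')).2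
      -- step inequality
      have hstep : M' + 1 + (if M' ∈ D' then 1 else 0) ≤ M := by
        by_cases hMD' : M' ∈ D'
        · have := hsep M' (Finset.mem_erase.mp hMD').2 M hMmem (Ne.symm hM'ne)
          simp only [hMD', if_true]
          omega
        · simp only [hMD', if_false]; omega
      have hDcard : (D'.card : ℤ) = D.card - (if M ∈ D then 1 else 0) := by
        by_cases hMD : M ∈ D
        · have := Finset.card_erase_of_mem hMD
          have : D'.card = D.card - 1 := this
          have hpos : 1 ≤ D.card := Finset.card_pos.mpr ⟨M, hMD⟩
          simp [hMD, this]
          omega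
        · have : D' = D := Finset.erase_eq_of_notMem hMD
          simp [hMD, this]
      have hScard1 : 1 ≤ S.card := Finset.card_pos.mpr hS
      have hS'card1 : 1 ≤ S'.card := Finset.card_pos.mpr hS'
      rw [hmin] at key
      push_cast [hcardS'] at key ⊢
      omega
    · -- S is a singleton {M}
      have hall : ∀ x ∈ S, x = M := by
        intro x hx
        by_contra hne
        exact hS' ⟨x, Finset.mem_erase.mpr ⟨hne, hx⟩⟩
      have hsingle : S = {M} := by
        ext x
        constructor
        · intro hx
          simp [hall x hx]
        · intro hx
          simpa [Finset.mem_singleton.mp hx] using S.max'_mem hS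
      have hcard1 : S.card = 1 := by rw [hsingle]; simp
      have hmin : S.min' hS = M := hall _ (S.min'_mem hS)
      by_cases hMD : M ∈ D
      · have : D = {M} := le_antisymm (hsingle ▸ hDS) (Finset.singleton_subset_iff.mpr hMD)
        simp [hMD, hcard1, this, hmin]
      · have : D = ∅ := by
          rw [Finset.eq_empty_iff_forall_notMem]
          intro x hx
          have := hDS hx
          rw [hsingle, Finset.mem_singleton] at this
          exact hMD (this ▸ hx)
        simp [hMD, hcard1, this, hmin]

lemma sepML : ∀ (n : ℕ) (S D : Finset ℤ), S.card ≤ n → D ⊆ S →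
    (∀ x ∈ D, ∀ y ∈ S, y ≠ x → 2 ≤ (y - x).natAbs) → ∀ (hS : S.Nonempty),
    (S \ D).Nonempty →
    (S.card : ℤ) + D.card - 1 ≤ S.max' hS - S.min' hS := by
  intro n
  induction n with
  | zero =>
    intro S D hcard _ _ hS _
    exact absurd (Finset.card_pos.mpr hS) (by omega)
  | succ n ih =>
    intro S D hcard hDS hsep hS hSD
    set M := S.max' hS with hM
    by_cases hMD : M ∈ D
    · -- erase M
      set S' := S.erase M with hSdef
      set D' := D.erase M with hDdef
      have hMmem : M ∈ S := S.max'_mem hS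
      have hDS' : D' ⊆ S' := fun x hx => Finset.mem_erase.mpr
        ⟨(Finset.mem_erase.mp hx).1, hDS (Finset.mem_erase.mp hx).2⟩
      have hsep' : ∀ x ∈ D', ∀ y ∈ S', y ≠ x → 2 ≤ (y - x).natAbs := fun x hx y hy hne =>
        hsep x (Finset.mem_erase.mp hx).2 y (Finset.mem_erase.mp hy).2 hne
      obtain ⟨w, hw⟩ := hSD
      have hwS : w ∈ S := (Finset.mem_sdiff.mp hw).1
      have hwD : w ∉ D := (Finset.mem_sdiff.mp hw).2
      have hwM : w ≠ M := fun h => hwD (h ▸ hMD)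
      have hwS' : w ∈ S' := Finset.mem_erase.mpr ⟨hwM, hwS⟩
      have hS' : S'.Nonempty := ⟨w, hwS'⟩
      have hSD' : (S' \ D').Nonempty := ⟨w, Finset.mem_sdiff.mpr ⟨hwS',
        fun h => hwD (Finset.mem_erase.mp h).2⟩⟩
      have hcardS' : S'.card = S.card - 1 := Finset.card_erase_of_mem hMmem
      have hcardD' : D'.card = D.card - 1 := Finset.card_erase_of_mem hMD
      have key := ih S' D' (by omega) hDS' hsep' hS' hSD'
      set M' := S'.max' hS' with hM'
      have hM'S : M' ∈ S' := S'.max'_mem hS'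
      have hM'ne : M' ≠ M := (Finset.mem_erase.mp hM'S).1
      have hM'mem : M' ∈ S := (Finset.mem_erase.mp hM'S).2
      have hM'lt : M' < M := lt_of_le_of_ne (S.le_max' _ hM'mem) hM'ne
      have hstep : M' + 2 ≤ M := by
        have := hsep M hMD M' hM'mem hM'ne
        omega
      have hminmemS' : S.min' hS ∈ S' := by
        refine Finset.mem_erase.mpr ⟨?_, S.min'_mem hS⟩
        intro h
        have : M' < S.min' hS := h ▸ hM'lt
        exact absurd (S.min'_le M' hM'mem) (by omega)
      have hmin : S'.min' hS' = S.min' hS := by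
        apply le_antisymm (S'.min'_le _ hminmemS')
        exact S.min'_le _ (Finset.mem_erase.mp (S'.min'_mem hS')).2
      rw [hmin] at key
      have hScard1 : 1 ≤ S.card := Finset.card_pos.mpr hS
      have hDcard1 : 1 ≤ D.card := Finset.card_pos.mpr ⟨M, hMD⟩
      push_cast [hcardS', hcardD'] at key ⊢
      omega
    · have key := sepQ S.card S D le_rfl hDS hsep hS
      rw [if_neg hMD] at key
      omega

/-- For an `r`-uniform star-hypergraph `K^r_{c,m}` with centre of size `c`
(`1 ≤ c < r`) and `m ≥ 2` edges, `λ(K^r_{c,m}) = m(r - c) + 2c - 1`. -/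
theorem lamL_starHypergraph {V : Type*} [Fintype V] (E : Finset (Finset V))
    (r c m : ℕ) (C : Finset V)
    (hm : 2 ≤ m) (hc : 1 ≤ c) (hcr : c < r)
    (hstar : IsStarHypergraph E r c m C) :
    lamL E 2 1 = m * (r - c) + 2 * c - 1 := by
  classical
  obtain ⟨hEcard, hunif, hCcard, hint, hcover⟩ := hstar
  -- the centre is contained in every edge
  have hCsub : ∀ e ∈ E, C ⊆ e := by
    intro e he
    obtain ⟨e', he', hne⟩ := Finset.exists_mem_ne (by omega : 1 < E.card) e
    rw [← hint e' he' e he hne]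
    exact Finset.inter_subset_right
  -- a vertex not in the centre lies in a unique edge
  have hedgeu : ∀ v, v ∉ C → ∀ e ∈ E, v ∈ e → ∀ e' ∈ E, v ∈ e' → e = e' := by
    intro v hv e he hve e' he' hve'
    by_contra hne
    exact hv (hint e he e' he' hne ▸ Finset.mem_inter.mpr ⟨hve, hve'⟩)
  -- cardinality of the vertex set
  have huniv : (Finset.univ : Finset V) = C ∪ E.biUnion (fun e => e \ C) := by
    ext v
    simp only [Finset.mem_univ, true_iff, Finset.mem_union, Finset.mem_biUnion,
      Finset.mem_sdiff]
    by_cases hv : v ∈ C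
    · exact Or.inl hv
    · obtain ⟨e, he, hve⟩ := hcover v
      exact Or.inr ⟨e, he, hve, hv⟩
  have hcardV : Fintype.card V = m * (r - c) + c := by
    have hdisj : (E : Set (Finset V)).PairwiseDisjoint (fun e => e \ C) := by
      intro e₁ h₁ e₂ h₂ hne
      simp only [Function.onFun, Finset.disjoint_left]
      intro a ha₁ ha₂
      have := hint e₁ h₁ e₂ h₂ hne
      have : a ∈ C := this ▸ Finset.mem_inter.mpr
        ⟨(Finset.mem_sdiff.mp ha₁).1, (Finset.mem_sdiff.mp ha₂).1⟩
      exact (Finset.mem_sdiff.mp ha₁).2 this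
    have h1 : Disjoint C (E.biUnion fun e => e \ C) := by
      simp only [Finset.disjoint_left]
      intro a ha hb
      obtain ⟨e, _, hae⟩ := Finset.mem_biUnion.mp hb
      exact (Finset.mem_sdiff.mp hae).2 ha
    rw [← Finset.card_univ, huniv, Finset.card_union_of_disjoint h1,
      Finset.card_biUnion hdisj]
    have hsum : ∀ e ∈ E, (e \ C).card = r - c := by
      intro e he
      rw [Finset.card_sdiff_of_subset (hCsub e he), hunif e he, hCcard]
    rw [Finset.sum_congr rfl hsum, Finset.sum_const, hEcard, hCcard, smul_eq_mul]
    omega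
  have hCne : C.Nonempty := Finset.card_pos.mp (by omega)
  have : Nonempty V := ⟨hCne.choose⟩
  -- every colouring is injective
  have hinj : ∀ f : V → ℕ, IsLColoring E 2 1 f → Function.Injective f := by
    intro f hf u v hfe
    by_contra hne
    obtain ⟨e₁, he₁, hue₁⟩ := hcover u
    obtain ⟨e₂, he₂, hve₂⟩ := hcover v
    by_cases hcom : ∃ e ∈ E, u ∈ e ∧ v ∈ e
    · have := hf.1 u v hne hcom
      simp only [hDist, hfe] at this
      omega
    · have hu : u ∉ C := fun h => hcom ⟨e₂, he₂, hCsub e₂ he₂ h, hve₂⟩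
      have hv : v ∉ C := fun h => hcom ⟨e₁, he₁, hue₁, hCsub e₁ he₁ h⟩
      obtain ⟨w, hw⟩ := hCne
      have hwit : ((e₁ ∩ e₂) \ {u, v}).Nonempty := by
        refine ⟨w, Finset.mem_sdiff.mpr ⟨Finset.mem_inter.mpr
          ⟨hCsub e₁ he₁ hw, hCsub e₂ he₂ hw⟩, ?_⟩⟩
        simp only [Finset.mem_insert, Finset.mem_singleton]
        rintro (rfl | rfl)
        · exact hu hw
        · exact hv hw
      have := hf.2 u v hne ⟨e₁, he₁, e₂, he₂, hue₁, hve₂, hwit⟩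
      simp only [hDist, hfe] at this
      omega
  -- every colouring separates centre vertices from everything by 2
  have hcsep : ∀ f : V → ℕ, IsLColoring E 2 1 f → ∀ w ∈ C, ∀ v : V, v ≠ w →
      2 ≤ hDist f v w := by
    intro f hf w hw v hne
    obtain ⟨e, he, hve⟩ := hcover v
    exact hf.1 v w hne ⟨e, he, hve, hCsub e he hw⟩
  -- lower bound: every colouring has span at least the target
  have hlow : ∀ f : V → ℕ, IsLColoring E 2 1 f → m * (r - c) + 2 * c - 1 ≤ hSpan f := by
    intro f hf
    have hfi := hinj f hf
    have hgi : Function.Injective (fun v : V => (f v : ℤ)) := by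
      intro a b hab
      have : (f a : ℤ) = (f b : ℤ) := hab
      exact hfi (by exact_mod_cast this)
    set S : Finset ℤ := Finset.univ.image (fun v : V => (f v : ℤ)) with hSdef
    set D : Finset ℤ := C.image (fun v : V => (f v : ℤ)) with hDdef
    have hScard : S.card = m * (r - c) + c := by
      rw [hSdef, Finset.card_image_of_injective _ hgi, Finset.card_univ, hcardV]
    have hDcard : D.card = c := by
      rw [hDdef, Finset.card_image_of_injective _ hgi, hCcard]
    have hDS : D ⊆ S := Finset.image_subset_image (Finset.subset_univ C)
    have hsep : ∀ x ∈ D, ∀ y ∈ S, y ≠ x → 2 ≤ (y - x).natAbs := by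
      intro x hx y hy hne
      obtain ⟨w, hw, rfl⟩ := Finset.mem_image.mp hx
      obtain ⟨v, _, rfl⟩ := Finset.mem_image.mp hy
      have hvw : v ≠ w := fun h => hne (by rw [h])
      have := hcsep f hf w hw v hvw
      simpa [hDist] using this
    have hSne : S.Nonempty := ⟨(f (Classical.arbitrary V) : ℤ),
      Finset.mem_image_of_mem _ (Finset.mem_univ _)⟩
    have hSD : (S \ D).Nonempty := by
      have hCuniv : C ≠ Finset.univ := by
        intro h
        have := Finset.card_univ (α := V) ▸ h ▸ hCcard
        have h2 : 1 * 1 ≤ m * (r - c) := Nat.mul_le_mul (by omega) (by omega)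
        omega
      obtain ⟨v, hv⟩ : ∃ v : V, v ∉ C := by
        by_contra h
        push_neg at h
        exact hCuniv (Finset.eq_univ_iff_forall.mpr h)
      refine ⟨(f v : ℤ), Finset.mem_sdiff.mpr
        ⟨Finset.mem_image_of_mem _ (Finset.mem_univ _), ?_⟩⟩
      intro hmem
      obtain ⟨w, hw, hfw⟩ := Finset.mem_image.mp hmem
      exact hv (hgi hfw ▸ hw)
    have key := sepML S.card S D le_rfl hDS hsep hSne hSD
    -- identify max' and min' with sup and sInf
    set Mn := Finset.univ.sup f with hMn
    set In := sInf (Set.range f) with hIn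
    have hMnmem : (Mn : ℤ) ∈ S := by
      obtain ⟨v, _, hv⟩ := Finset.exists_mem_eq_sup Finset.univ
        Finset.univ_nonempty f
      exact Finset.mem_image.mpr ⟨v, Finset.mem_univ v, by rw [← hv]⟩
    have hInmem : (In : ℤ) ∈ S := by
      obtain ⟨v, hv⟩ := Nat.sInf_mem (Set.range_nonempty f)
      exact Finset.mem_image.mpr ⟨v, Finset.mem_univ v, by rw [hv]⟩
    have hmax : S.max' hSne = (Mn : ℤ) := by
      apply le_antisymm
      · apply Finset.max'_le
        intro y hy
        obtain ⟨v, _, rfl⟩ := Finset.mem_image.mp hy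
        exact_mod_cast Finset.le_sup (Finset.mem_univ v)
      · exact Finset.le_max' _ _ hMnmem
    have hminS : S.min' hSne = (In : ℤ) := by
      apply le_antisymm
      · exact Finset.min'_le _ _ hInmem
      · apply Finset.le_min'
        intro y hy
        obtain ⟨v, _, rfl⟩ := Finset.mem_image.mp hy
        exact_mod_cast Nat.sInf_le (Set.mem_range_self v)
    rw [hmax, hminS, hScard, hDcard] at key
    have hIM : In ≤ Mn := by omega
    simp only [hSpan, ← hMn, ← hIn]
    omega
  -- construction of an optimal colouring
  set ev : V → Finset V := fun v => Classical.choose (hcover v) with hevdef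
  have hevE : ∀ v, ev v ∈ E := fun v => (Classical.choose_spec (hcover v)).1
  have hevM : ∀ v, v ∈ ev v := fun v => (Classical.choose_spec (hcover v)).2
  set idxC : V → ℕ := fun v => C.toList.idxOf v with hidxCdef
  set idxE : Finset V → ℕ := fun e => E.toList.idxOf e with hidxEdef
  set idxI : V → ℕ := fun v => ((ev v) \ C).toList.idxOf v with hidxIdef
  set f₀ : V → ℕ := fun v => if v ∈ C then 2 * idxC v
    else 2 * c + idxE (ev v) + m * idxI v with hf₀
  have hvCval : ∀ v ∈ C, f₀ v = 2 * idxC v := by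
    intro v hv
    simp only [hf₀, if_pos hv]
  have hvNCval : ∀ v, v ∉ C → f₀ v = 2 * c + idxE (ev v) + m * idxI v := by
    intro v hv
    simp only [hf₀, if_neg hv]
  have hidxClt : ∀ v ∈ C, idxC v < c := by
    intro v hv
    have : idxC v < C.toList.length :=
      List.idxOf_lt_length_iff.mpr (Finset.mem_toList.mpr hv)
    rwa [Finset.length_toList, hCcard] at this
  have hidxElt : ∀ e ∈ E, idxE e < m := by
    intro e he
    have : idxE e < E.toList.length :=
      List.idxOf_lt_length_iff.mpr (Finset.mem_toList.mpr he)
    rwa [Finset.length_toList, hEcard] at this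
  have hmemI : ∀ v, v ∉ C → v ∈ (ev v) \ C := fun v hv =>
    Finset.mem_sdiff.mpr ⟨hevM v, hv⟩
  have hidxIlt : ∀ v, v ∉ C → idxI v < r - c := by
    intro v hv
    have h1 : idxI v < ((ev v) \ C).toList.length :=
      List.idxOf_lt_length_iff.mpr (Finset.mem_toList.mpr (hmemI v hv))
    rwa [Finset.length_toList, Finset.card_sdiff_of_subset (hCsub _ (hevE v)),
      hunif _ (hevE v), hCcard] at h1
  have hinjC : ∀ u ∈ C, ∀ v ∈ C, idxC u = idxC v → u = v := by
    intro u hu v hv h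
    exact (List.idxOf_inj (Finset.mem_toList.mpr hu)).mp h
  have hinjE : ∀ e₁ ∈ E, ∀ e₂ ∈ E, idxE e₁ = idxE e₂ → e₁ = e₂ := by
    intro e₁ h₁ e₂ h₂ h
    exact (List.idxOf_inj (Finset.mem_toList.mpr h₁)).mp h
  have hinjI : ∀ u, u ∉ C → ∀ v, v ∉ C → ev u = ev v → idxI u = idxI v → u = v := by
    intro u hu v hv hee h
    have h2 : ((ev u) \ C).toList.idxOf u = ((ev u) \ C).toList.idxOf v := by
      simp only [hidxIdef] at h
      rw [← hee] at h
      exact h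
    exact (List.idxOf_inj (Finset.mem_toList.mpr (hmemI u hu))
      ).mp h2
  have hubC : ∀ v ∈ C, f₀ v + 2 ≤ 2 * c := by
    intro v hv
    have := hidxClt v hv
    rw [hvCval v hv]
    omega
  have hlbNC : ∀ v, v ∉ C → 2 * c ≤ f₀ v := by
    intro v hv
    rw [hvNCval v hv]
    omega
  have hubAll : ∀ v, f₀ v + 1 ≤ 2 * c + m * (r - c) := by
    intro v
    by_cases hv : v ∈ C
    · have := hubC v hv
      have h0 : (0:ℕ) ≤ m * (r - c) := Nat.zero_le _
      linarith
    · rw [hvNCval v hv]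
      have h1 : m * idxI v ≤ m * (r - c - 1) :=
        Nat.mul_le_mul_left m (by have := hidxIlt v hv; omega)
      have h2 : m * (r - c - 1) + m = m * (r - c) := by
        rw [← Nat.mul_succ]
        congr 1
        omega
      have h3 := hidxElt (ev v) (hevE v)
      linarith
  -- also edge uniqueness for non-centre vertices
  have hgap : ∀ a b : ℕ, a < b → m * a + 2 ≤ m * b := by
    intro a b h
    have := Nat.mul_le_mul_left m (show a + 1 ≤ b from h)
    rw [Nat.mul_add, Nat.mul_one] at this
    omega
  have hf0ne : ∀ u v : V, u ≠ v → f₀ u ≠ f₀ v := by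
    intro u v hne heq
    by_cases hu : u ∈ C <;> by_cases hv : v ∈ C
    · rw [hvCval u hu, hvCval v hv] at heq
      exact hne (hinjC u hu v hv (by omega))
    · have := hubC u hu; have := hlbNC v hv; omega
    · have := hubC v hv; have := hlbNC u hu; omega
    · rw [hvNCval u hu, hvNCval v hv] at heq
      have heq2 : idxE (ev u) + m * idxI u = idxE (ev v) + m * idxI v := by omega
      have hj : idxE (ev u) = idxE (ev v) := by
        have h3 := congrArg (· % m) heq2
        simpa [Nat.add_mul_mod_self_left, Nat.mod_eq_of_lt (hidxElt _ (hevE u)),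
          Nat.mod_eq_of_lt (hidxElt _ (hevE v))] using h3
      have hee : ev u = ev v := hinjE _ (hevE u) _ (hevE v) hj
      have hmul : m * idxI u = m * idxI v := by omega
      have ht : idxI u = idxI v := Nat.eq_of_mul_eq_mul_left (by omega) hmul
      exact hne (hinjI u hu v hv hee ht)
  have hcol : IsLColoring E 2 1 f₀ := by
    constructor
    · rintro u v hne ⟨e, he, hue, hve⟩
      have hkey : f₀ u + 2 ≤ f₀ v ∨ f₀ v + 2 ≤ f₀ u := by
        by_cases hu : u ∈ C <;> by_cases hv : v ∈ C
        · have hab : idxC u ≠ idxC v := fun h => hne (hinjC u hu v hv h)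
          rw [hvCval u hu, hvCval v hv]
          omega
        · have := hubC u hu; have := hlbNC v hv; omega
        · have := hubC v hv; have := hlbNC u hu; omega
        · have heu : e = ev u := hedgeu u hu e he hue (ev u) (hevE u) (hevM u)
          have hev : e = ev v := hedgeu v hv e he hve (ev v) (hevE v) (hevM v)
          have hee : ev u = ev v := heu ▸ hev
          have htne : idxI u ≠ idxI v := fun h => hne (hinjI u hu v hv hee h)
          rw [hvNCval u hu, hvNCval v hv, ← hee]
          rcases Nat.lt_or_ge (idxI u) (idxI v) with h | h
          · have := hgap _ _ h
            omega
          · have hlt : idxI v < idxI u := by omega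
            have := hgap _ _ hlt
            omega
      simp only [hDist]
      omega
    · intro u v hne _
      have := hf0ne u v hne
      simp only [hDist]
      omega
  have hspan_le : hSpan f₀ ≤ m * (r - c) + 2 * c - 1 := by
    have hsup : Finset.univ.sup f₀ + 1 ≤ 2 * c + m * (r - c) := by
      have h1 : Finset.univ.sup f₀ ≤ 2 * c + m * (r - c) - 1 :=
        Finset.sup_le fun v _ => by have := hubAll v; omega
      omega
    have h2 : hSpan f₀ ≤ Finset.univ.sup f₀ := Nat.sub_le _ _
    omega
  have hmem : hSpan f₀ ∈ {s | ∃ f : V → ℕ, IsLColoring E 2 1 f ∧ hSpan f = s} :=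
    ⟨f₀, hcol, rfl⟩
  apply le_antisymm
  · exact le_trans (Nat.sInf_le hmem) hspan_le
  · refine le_csInf ⟨_, hmem⟩ ?_
    rintro s ⟨f, hf, rfl⟩
    exact hlow f hf
end
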